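/- arXiv:1612.07552 — 2 statements merged into one kernel-verified Lean document; each statement's English description precedes it below -/
import Mathlib

section
/- Let P be the path graph with vertices w_0, w_1, …, w_n (n ≥ 1) and edges e_i = {w_{i−1}, w_i} for i = 1, …, n, and let f be a minimum gradation greyscale of P. Then f̂(e_i) = 1/n for every i = 1, …, n. -/
open SimpleGraph

/-- A greyscale of a graph on vertex set `V`: a map to `[0,1]` attaining both `0` and `1`. -/
def IsGreyscale {V : Type*} (f : V → ℝ) : Prop :=
  (∀ w, 0 ≤ f w ∧ f w ≤ 1) ∧ (∃ a, f a = 0) ∧ (∃ b, f b = 1)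

/-- The grey tone of an edge: the absolute difference of the tones of its endpoints. -/
noncomputable def greyTone {V : Type*} (f : V → ℝ) : Sym2 V → ℝ :=
  Sym2.lift ⟨fun a b => |f a - f b|, fun _ _ => abs_sub_comm _ _⟩

/-- The edge-colour-increase mapping `F(u,v) = |f u - f v| / d(u,v)` (and `0` on the diagonal). -/
noncomputable def ecim {V : Type*} (G : SimpleGraph V) (f : V → ℝ) (u v : V) : ℝ :=
  letI := Classical.dec (u = v)
  if u = v then 0 else |f u - f v| / (G.dist u v : ℝ)

/-- The support greyscale for antipodal vertices `u, v` of a graph of diameter `D`. -/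
noncomputable def supportGreyscale {V : Type*} (G : SimpleGraph V) (u v : V) (D : ℕ)
    (w : V) : ℝ :=
  ((G.dist w u : ℝ) - (G.dist w v : ℝ) + (D : ℝ)) / (2 * (D : ℝ))

/-- The gradation vector: the grey tones of all edges, sorted in decreasing order. -/
noncomputable def gradVec {V : Type*} [Fintype V] (G : SimpleGraph V) (f : V → ℝ) : List ℝ :=
  letI := Classical.decEq V
  letI : DecidableRel G.Adj := Classical.decRel _
  (G.edgeFinset.val.map (greyTone f)).sort (· ≥ ·)

/-- Lexicographic comparison of gradation vectors: `f` is smaller than or equal to `g`. -/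
def GradLE {V : Type*} [Fintype V] (G : SimpleGraph V) (f g : V → ℝ) : Prop :=
  gradVec G f = gradVec G g ∨ List.Lex (· < ·) (gradVec G f) (gradVec G g)

/-- A minimum gradation greyscale: a greyscale whose gradation vector is lexicographically
minimal among the gradation vectors of all greyscales. -/
def IsMinGradGreyscale {V : Type*} [Fintype V] (G : SimpleGraph V) (f : V → ℝ) : Prop :=
  IsGreyscale f ∧ ∀ g : V → ℝ, IsGreyscale g → GradLE G f g

section Aux

open Finset

private lemma stepInj (n : ℕ) : Function.Injective
    (fun i : Fin n => s(Fin.castSucc i, Fin.succ i)) := by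
  intro i j h
  simp only [Sym2.eq_iff] at h
  rcases h with ⟨h1, h2⟩ | ⟨h1, h2⟩
  · exact Fin.castSucc_injective _ h1
  · apply_fun Fin.val at h1 h2
    simp [Fin.val_succ] at h1 h2
    omega

private lemma edgeFinset_path (n : ℕ) [inst : Fintype (pathGraph (n+1)).edgeSet] :
    (pathGraph (n+1)).edgeFinset =
      Finset.map ⟨fun i : Fin n => s(Fin.castSucc i, Fin.succ i), stepInj n⟩ Finset.univ := by
  ext e
  induction e using Sym2.ind with
  | _ a b =>
    simp only [mem_edgeFinset, mem_edgeSet, pathGraph_adj, Finset.mem_map, Finset.mem_univ,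
      true_and, Function.Embedding.coeFn_mk, Sym2.eq_iff]
    constructor
    · rintro (h | h)
      · refine ⟨⟨a.val, by omega⟩, Or.inl ⟨?_, ?_⟩⟩ <;> apply Fin.ext <;> simp [h]
      · refine ⟨⟨b.val, by omega⟩, Or.inr ⟨?_, ?_⟩⟩ <;> apply Fin.ext <;> simp [h]
    · rintro ⟨i, (⟨h1, h2⟩ | ⟨h1, h2⟩)⟩
      · left; subst h1; subst h2; simp
      · right; subst h1; subst h2; simp

private lemma gradVec_path_coe (n : ℕ) (h : Fin (n+1) → ℝ) :
    (↑(gradVec (pathGraph (n+1)) h) : Multiset ℝ) =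
      Multiset.map (fun i : Fin n => |h i.castSucc - h i.succ|) Finset.univ.val := by
  unfold gradVec
  rw [Multiset.sort_eq, edgeFinset_path, Finset.map_val, Multiset.map_map]
  apply Multiset.map_congr rfl
  intro i _
  simp [greyTone]

private lemma gradVec_sorted {V : Type*} [Fintype V] (G : SimpleGraph V) (f : V → ℝ) :
    (gradVec G f).Pairwise (· ≥ ·) := by
  unfold gradVec
  exact Multiset.pairwise_sort _ _

private lemma sum_tones_ge (n : ℕ) (f : Fin (n+1) → ℝ) (a b : Fin (n+1)) :
    |f a - f b| ≤ ∑ i : Fin n, |f i.castSucc - f i.succ| := by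
  set g : ℕ → ℝ := fun k => f ⟨min k n, by omega⟩ with hg
  have hgf : ∀ k : Fin (n+1), g k.val = f k := by
    intro k; simp only [hg]; congr 1; apply Fin.ext; simp; omega
  have key : ∀ u v : ℕ, u ≤ v → v ≤ n →
      |g v - g u| ≤ ∑ i ∈ range n, |g (i+1) - g i| := by
    intro u v huv hv
    have tel : ∑ i ∈ Finset.Ico u v, (g (i+1) - g i) = g v - g u := by
      rw [Finset.sum_Ico_eq_sub _ huv, Finset.sum_range_sub, Finset.sum_range_sub]
      ring
    calc |g v - g u| = |∑ i ∈ Finset.Ico u v, (g (i+1) - g i)| := by rw [tel]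
      _ ≤ ∑ i ∈ Finset.Ico u v, |g (i+1) - g i| := Finset.abs_sum_le_sum_abs _ _
      _ ≤ ∑ i ∈ range n, |g (i+1) - g i| := by
          apply Finset.sum_le_sum_of_subset_of_nonneg
          · intro x hx; simp at hx ⊢; omega
          · intros; positivity
  have hsum : ∑ i ∈ range n, |g (i+1) - g i| = ∑ i : Fin n, |f i.castSucc - f i.succ| := by
    rw [Finset.sum_range (fun i => |g (i+1) - g i|)]
    apply Finset.sum_congr rfl
    intro i _
    have h1 : g (i.val + 1) = f i.succ := by
      have := hgf i.succ; simpa using this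
    have h2 : g i.val = f i.castSucc := by
      have := hgf i.castSucc; simpa using this
    rw [h1, h2, abs_sub_comm]
  rw [← hsum]
  rcases le_total a.val b.val with h | h
  · rw [abs_sub_comm, ← hgf a, ← hgf b]; exact key a.val b.val h (by omega)
  · rw [← hgf a, ← hgf b]; exact key b.val a.val h (by omega)

private lemma lex_sum_lt (c : ℝ) : ∀ (m : ℕ) (L : List ℝ), L.Pairwise (· ≥ ·) → L.length = m →
    List.Lex (· < ·) L (List.replicate m c) → L.sum < m * c := by
  intro m
  induction m with
  | zero => intro L _ _ hlex; simp at hlex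
  | succ m ih =>
    intro L hs hl hlex
    match L with
    | [] => simp at hl
    | a :: L' =>
      rw [List.replicate_succ] at hlex
      cases hlex with
      | rel h =>
        have hle : ∀ x ∈ L', x ≤ a := fun x hx => (List.pairwise_cons.mp hs).1 x hx
        have hsle : L'.sum ≤ L'.length * a := by
          calc L'.sum ≤ L'.length • a := List.sum_le_card_nsmul L' a hle
            _ = L'.length * a := by simp [nsmul_eq_mul]
        have hlen : L'.length = m := by simpa using hl
        rw [hlen] at hsle
        simp only [List.sum_cons]
        push_cast
        nlinarith [h]
      | cons h =>
        have := ih L' (List.pairwise_cons.mp hs).2 (by simpa using hl) h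
        simp only [List.sum_cons]
        push_cast
        linarith

end Aux

theorem stmt_14 (n : ℕ) (hn : 1 ≤ n) (f : Fin (n + 1) → ℝ)
    (hmin : IsMinGradGreyscale (pathGraph (n + 1)) f) :
    ∀ i : Fin n, |f i.castSucc - f i.succ| = 1 / (n : ℝ) := by
  intro i
  have hn0 : (0:ℝ) < (n : ℝ) := by exact_mod_cast hn
  set ℓ : Fin (n+1) → ℝ := fun k => (k.val : ℝ) / n with hℓ
  have hℓg : IsGreyscale ℓ := by
    refine ⟨fun w => ⟨by positivity, ?_⟩, ⟨0, by simp [hℓ]⟩, ⟨Fin.last n, ?_⟩⟩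
    · rw [div_le_one hn0]
      exact_mod_cast (by omega : w.val ≤ n)
    · simp only [hℓ, Fin.val_last]
      field_simp
  have hrep : gradVec (pathGraph (n+1)) ℓ = List.replicate n (1/(n:ℝ)) := by
    have hcoe : (↑(gradVec (pathGraph (n+1)) ℓ) : Multiset ℝ)
        = Multiset.replicate n (1/(n:ℝ)) := by
      rw [gradVec_path_coe]
      have htone : ∀ j : Fin n, |ℓ j.castSucc - ℓ j.succ| = 1/(n:ℝ) := by
        intro j
        simp only [hℓ, Fin.coe_castSucc, Fin.val_succ]
        rw [div_sub_div_same, abs_div, abs_of_pos hn0]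
        congr 1
        push_cast
        rw [abs_of_nonpos] <;> ring_nf <;> norm_num
      rw [Multiset.map_congr rfl (fun j _ => htone j), Multiset.map_const']
      simp
    refine List.eq_replicate_iff.mpr ⟨?_, ?_⟩
    · have := congrArg Multiset.card hcoe; simpa using this
    · intro b hb
      have hb' : b ∈ (↑(gradVec (pathGraph (n+1)) ℓ) : Multiset ℝ) := by simpa using hb
      rw [hcoe] at hb'
      exact Multiset.eq_of_mem_replicate hb'
  obtain ⟨⟨hbd, ⟨a, ha⟩, ⟨b, hb⟩⟩, hle⟩ := hmin
  have hS : (1:ℝ) ≤ ∑ j : Fin n, |f j.castSucc - f j.succ| := by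
    have := sum_tones_ge n f b a
    rw [hb, ha] at this
    simpa using this
  have hsumf : (gradVec (pathGraph (n+1)) f).sum
      = ∑ j : Fin n, |f j.castSucc - f j.succ| := by
    have := congrArg Multiset.sum (gradVec_path_coe n f)
    rw [Finset.sum]
    simpa using this
  have hlenf : (gradVec (pathGraph (n+1)) f).length = n := by
    have := congrArg Multiset.card (gradVec_path_coe n f)
    simpa using this
  rcases hle ℓ hℓg with heq | hlex
  · have hcoe2 : Multiset.map (fun j : Fin n => |f j.castSucc - f j.succ|) Finset.univ.val
        = Multiset.replicate n (1/(n:ℝ)) := by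
      rw [← gradVec_path_coe, heq, hrep]
      simp [Multiset.coe_replicate]
    have hmem : |f i.castSucc - f i.succ| ∈ Multiset.replicate n (1/(n:ℝ)) := by
      rw [← hcoe2]
      exact Multiset.mem_map_of_mem _ (Finset.mem_univ i)
    exact Multiset.eq_of_mem_replicate hmem
  · exfalso
    rw [hrep] at hlex
    have hlt := lex_sum_lt (1/(n:ℝ)) n _ (gradVec_sorted _ f) hlenf hlex
    rw [hsumf] at hlt
    have hne : (n:ℝ) * (1/(n:ℝ)) = 1 := by field_simp
    linarith
end

section
/- Let G be a finite simple connected graph with at least two vertices and diameter d(G), and let f be a minimum gradation greyscale of G. Then f̂(e) ≤ 1/d(G) for every edge e of G, and at least d(G) edges e of G satisfy f̂(e) = 1/d(G); equivalently, the first d(G) components of the minimum gradation vector of G are equal to 1/d(G). -/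
open SimpleGraph

lemma greyTone_mk {V : Type*} (f : V → ℝ) (a b : V) : greyTone f s(a,b) = |f a - f b| := rfl

lemma mem_gradVec {V : Type*} [Fintype V] (G : SimpleGraph V) (f : V → ℝ) (x : ℝ) :
    x ∈ gradVec G f ↔ ∃ e ∈ G.edgeSet, greyTone f e = x := by
  unfold gradVec
  simp [Multiset.mem_sort, Multiset.mem_map, ← Finset.mem_def, mem_edgeFinset]

lemma sorted_gradVec {V : Type*} [Fintype V] (G : SimpleGraph V) (f : V → ℝ) :
    List.Pairwise (· ≥ ·) (gradVec G f) := Multiset.pairwise_sort _ _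

lemma length_gradVec {V : Type*} [Fintype V] (G : SimpleGraph V) (f g : V → ℝ) :
    (gradVec G f).length = (gradVec G g).length := by
  simp [gradVec, Multiset.length_sort]

lemma gradLE_bound {V : Type*} [Fintype V] (G : SimpleGraph V) {f g : V → ℝ}
    (h : GradLE G f g) (c : ℝ) (hg : ∀ y ∈ gradVec G g, y ≤ c) :
    ∀ x ∈ gradVec G f, x ≤ c := by
  intro x hx
  have hlen := length_gradVec G f g
  rcases h with h | h
  · exact hg x (h ▸ hx)
  · cases h' : gradVec G f with
    | nil => simp [h'] at hx
    | cons a t =>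
      cases h'' : gradVec G g with
      | nil => rw [h', h''] at hlen; simp at hlen
      | cons b s =>
        rw [h', h''] at h
        have hab : a ≤ b := by
          cases h with
          | cons _ => exact le_rfl
          | rel hr => exact le_of_lt hr
        have hxa : x ≤ a := by
          have hs := sorted_gradVec G f
          rw [h'] at hs hx
          rcases List.mem_cons.mp hx with rfl | hxt
          · exact le_rfl
          · exact List.rel_of_pairwise_cons hs hxt
        have hb : b ≤ c := hg b (by rw [h'']; exact List.mem_cons_self)
        linarith

lemma tone_walk_le {V : Type*} {G : SimpleGraph V} (f : V → ℝ) {x y : V}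
    (p : G.Walk x y) (c : ℝ) (h : ∀ e ∈ p.edges, greyTone f e ≤ c) :
    |f y - f x| ≤ p.length * c := by
  induction p with
  | nil => simp
  | @cons x x' y h' q ih =>
    simp only [Walk.edges_cons, List.mem_cons] at h
    have h1 : |f x - f x'| ≤ c := h _ (Or.inl rfl)
    have h2 := ih (fun e he => h e (Or.inr he))
    have tri : |f y - f x| ≤ |f y - f x'| + |f x' - f x| := abs_sub_le _ _ _
    have h1' : |f x' - f x| ≤ c := by rwa [abs_sub_comm]
    simp only [Walk.length_cons]
    push_cast
    linarith

lemma tone_walk_eq {V : Type*} {G : SimpleGraph V} (f : V → ℝ) {x y : V}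
    (p : G.Walk x y) (c : ℝ) (h : ∀ e ∈ p.edges, greyTone f e ≤ c)
    (heq : |f y - f x| = p.length * c) :
    ∀ e ∈ p.edges, greyTone f e = c := by
  induction p with
  | nil => simp
  | @cons x x' y h' q ih =>
    simp only [Walk.edges_cons, List.mem_cons] at h ⊢
    have h1 : |f x - f x'| ≤ c := h _ (Or.inl rfl)
    have h2 := tone_walk_le f q c (fun e he => h e (Or.inr he))
    have tri : |f y - f x| ≤ |f y - f x'| + |f x' - f x| := abs_sub_le _ _ _
    have h1' : |f x' - f x| ≤ c := by rwa [abs_sub_comm]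
    simp only [Walk.length_cons] at heq
    push_cast at heq
    have e1 : |f x - f x'| = c := by rw [abs_sub_comm]; linarith
    have e2 : |f y - f x'| = q.length * c := by linarith
    intro e he
    rcases he with rfl | he
    · exact e1
    · exact ih (fun e he => h e (Or.inr he)) e2 e he

theorem stmt_15 {V : Type*} [Fintype V] [Nontrivial V] (G : SimpleGraph V)
    (hG : G.Connected) (D : ℕ)
    (hDub : ∀ a b : V, G.dist a b ≤ D)
    (hDmax : ∃ a b : V, G.dist a b = D)
    (f : V → ℝ) (hmin : IsMinGradGreyscale G f) :
    (∀ a b : V, G.Adj a b → |f a - f b| ≤ 1 / (D : ℝ)) ∧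
    D ≤ {e ∈ G.edgeSet | greyTone f e = 1 / (D : ℝ)}.ncard := by
  classical
  obtain ⟨hf_grey, hf_min⟩ := hmin
  obtain ⟨u, v, huv⟩ := hDmax
  have hD1 : 1 ≤ D := by
    obtain ⟨x, y, hxy⟩ := exists_pair_ne V
    have h1 := hG.pos_dist_of_ne hxy
    have h2 := hDub x y
    omega
  have hD0 : (0:ℝ) < D := by exact_mod_cast Nat.pos_of_ne_zero (by omega)
  set g := supportGreyscale G u v D with hgdef
  have hvu : G.dist v u = D := by rw [SimpleGraph.dist_comm]; exact huv
  have hgw : ∀ w, g w = ((G.dist w u : ℝ) - (G.dist w v : ℝ) + D) / (2*D) := fun w => rfl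
  have hg_grey : IsGreyscale g := by
    refine ⟨fun w => ?_, ⟨u, ?_⟩, ⟨v, ?_⟩⟩
    · have t1 : G.dist w v ≤ G.dist w u + D := by
        calc G.dist w v ≤ G.dist w u + G.dist u v := hG.dist_triangle
        _ = G.dist w u + D := by rw [huv]
      have t2 : G.dist w u ≤ G.dist w v + D := by
        calc G.dist w u ≤ G.dist w v + G.dist v u := hG.dist_triangle
        _ = G.dist w v + D := by rw [hvu]
      have t1' : (G.dist w v : ℝ) ≤ G.dist w u + D := by exact_mod_cast t1
      have t2' : (G.dist w u : ℝ) ≤ G.dist w v + D := by exact_mod_cast t2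
      rw [hgw]
      constructor
      · apply div_nonneg (by linarith) (by linarith)
      · rw [div_le_one (by linarith)]; linarith
    · rw [hgw]; rw [SimpleGraph.dist_self, huv]; simp
    · rw [hgw]; rw [SimpleGraph.dist_self, hvu]
      rw [div_eq_one_iff_eq (by positivity)]; push_cast; ring
  have hg_tone : ∀ e ∈ G.edgeSet, greyTone g e ≤ 1 / D := by
    intro e he
    induction e using Sym2.ind with
    | _ a b =>
      rw [SimpleGraph.mem_edgeSet] at he
      rw [greyTone_mk]
      have d1 : G.dist a b = 1 := SimpleGraph.dist_eq_one_iff_adj.mpr he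
      have d2 : G.dist b a = 1 := by rw [SimpleGraph.dist_comm]; exact d1
      have t1 : G.dist a u ≤ G.dist b u + 1 := by
        have := hG.dist_triangle (u := a) (v := b) (w := u); omega
      have t2 : G.dist b u ≤ G.dist a u + 1 := by
        have := hG.dist_triangle (u := b) (v := a) (w := u); omega
      have t3 : G.dist a v ≤ G.dist b v + 1 := by
        have := hG.dist_triangle (u := a) (v := b) (w := v); omega
      have t4 : G.dist b v ≤ G.dist a v + 1 := by
        have := hG.dist_triangle (u := b) (v := a) (w := v); omega
      have e1 : |(G.dist a u : ℝ) - G.dist b u| ≤ 1 := by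
        rw [abs_le]
        constructor
        · have : (G.dist b u : ℝ) ≤ G.dist a u + 1 := by exact_mod_cast t2
          linarith
        · have : (G.dist a u : ℝ) ≤ G.dist b u + 1 := by exact_mod_cast t1
          linarith
      have e2 : |(G.dist a v : ℝ) - G.dist b v| ≤ 1 := by
        rw [abs_le]
        constructor
        · have : (G.dist b v : ℝ) ≤ G.dist a v + 1 := by exact_mod_cast t4
          linarith
        · have : (G.dist a v : ℝ) ≤ G.dist b v + 1 := by exact_mod_cast t3
          linarith
      have hd : g a - g b =
          (((G.dist a u:ℝ) - G.dist b u) - ((G.dist a v:ℝ) - G.dist b v)) / (2*D) := by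
        rw [hgw, hgw]; ring
      rw [hd, abs_div, abs_of_pos (by linarith : (0:ℝ) < 2*D)]
      rw [div_le_div_iff₀ (by linarith) hD0]
      have hnum : |((G.dist a u:ℝ) - G.dist b u) - ((G.dist a v:ℝ) - G.dist b v)| ≤ 2 := by
        calc _ ≤ |(G.dist a u:ℝ) - G.dist b u| + |(G.dist a v:ℝ) - G.dist b v| :=
          abs_sub _ _
        _ ≤ 2 := by linarith
      nlinarith [abs_nonneg (((G.dist a u:ℝ) - G.dist b u) - ((G.dist a v:ℝ) - G.dist b v))]
  have part1 : ∀ e ∈ G.edgeSet, greyTone f e ≤ 1 / D := by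
    intro e he
    have hx : greyTone f e ∈ gradVec G f := (mem_gradVec G f _).mpr ⟨e, he, rfl⟩
    refine gradLE_bound G (hf_min g hg_grey) (1/D) ?_ _ hx
    intro y hy
    obtain ⟨e', he', rfl⟩ := (mem_gradVec G g y).mp hy
    exact hg_tone e' he'
  have part1' : ∀ a b : V, G.Adj a b → |f a - f b| ≤ 1 / D := by
    intro a b hab
    have := part1 s(a,b) (G.mem_edgeSet.mpr hab)
    rwa [greyTone_mk] at this
  refine ⟨part1', ?_⟩
  obtain ⟨-, ⟨a, ha⟩, ⟨b, hb⟩⟩ := hf_grey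
  obtain ⟨p, hpath, hplen⟩ := hG.exists_path_of_dist a b
  have hple : p.length ≤ D := by rw [hplen]; exact hDub a b
  have htone_le : ∀ e ∈ p.edges, greyTone f e ≤ 1/D :=
    fun e he => part1 e (Walk.edges_subset_edgeSet p he)
  have hwlk := tone_walk_le f p (1/D) htone_le
  rw [hb, ha] at hwlk
  simp only [sub_zero, abs_one] at hwlk
  have hlen_ge : (D:ℝ) ≤ p.length := by
    rw [mul_one_div] at hwlk
    exact (one_le_div hD0).mp hwlk
  have hlenD : p.length = D := by
    have : D ≤ p.length := by exact_mod_cast hlen_ge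
    omega
  have heq : |f b - f a| = p.length * (1/D) := by
    rw [hb, ha, hlenD, sub_zero, abs_one, mul_one_div, div_self (by positivity)]
  have htone_eq := tone_walk_eq f p (1/D) htone_le heq
  have hsub : ↑p.edges.toFinset ⊆ {e ∈ G.edgeSet | greyTone f e = 1 / (D:ℝ)} := by
    intro e he
    rw [Finset.mem_coe, List.mem_toFinset] at he
    exact ⟨Walk.edges_subset_edgeSet p he, htone_eq e he⟩
  have hcard : p.edges.toFinset.card = D := by
    rw [List.toFinset_card_of_nodup hpath.edges_nodup, Walk.length_edges, hlenD]
  calc D = (↑p.edges.toFinset : Set (Sym2 V)).ncard := by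
        rw [Set.ncard_coe_finset, hcard]
    _ ≤ _ := Set.ncard_le_ncard hsub (Set.toFinite _)
end
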